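/- arXiv:1109.6340 — 12 statements merged into one kernel-verified Lean document; each statement's English description precedes it below -/
import Mathlib

section
/- A deal δ = (A, A') is individually rational (i.e., there exists a payment function p : 𝒜 → ℝ with Σᵢ p(i) = 0 such that uᵢ(A'(i)) − uᵢ(A(i)) > p(i) for all agents i, except possibly p(i) = 0 for agents with A(i) = A'(i)) if and only if sw_u(A) < sw_u(A'), where sw_u(A) = Σᵢ uᵢ(A(i)) is utilitarian social welfare. -/
variable {Agent Res : Type*} [Fintype Agent] [Fintype Res] [DecidableEq Agent] [Nonempty Agent]

/-- The bundle of resources held by agent `i` under allocation (holder map) `f`. -/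
def bundle (f : Res → Agent) (i : Agent) : Finset Res :=
  Finset.univ.filter fun r => f r = i

/-- Utilitarian social welfare. -/
def swu (u : Agent → Finset Res → ℝ) (f : Res → Agent) : ℝ :=
  ∑ i, u i (bundle f i)

/-- A deal (A, A') is individually rational (there is a payment function `p` summing to 0
with `uᵢ(A') − uᵢ(A) > p i` for all agents, except possibly `p i = 0` for agents whose
bundle does not change) iff utilitarian social welfare strictly increases. -/
theorem stmt0 (u : Agent → Finset Res → ℝ) (A A' : Res → Agent) (hne : A ≠ A') :
    (∃ p : Agent → ℝ, (∑ i, p i) = 0 ∧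
      ∀ i, u i (bundle A' i) - u i (bundle A i) > p i ∨
        (bundle A i = bundle A' i ∧ p i = 0)) ↔ swu u A < swu u A' := by
  constructor
  · rintro ⟨p, hsum, hp⟩
    obtain ⟨r, hr⟩ : ∃ r, A r ≠ A' r := by
      by_contra h
      push_neg at h
      exact hne (funext h)
    have hbne : bundle A (A r) ≠ bundle A' (A r) := by
      intro h
      have h1 : r ∈ bundle A (A r) := by simp [bundle]
      rw [h] at h1
      simp [bundle] at h1
      exact hr h1.symm
    have hle : ∀ i ∈ Finset.univ, p i ≤ u i (bundle A' i) - u i (bundle A i) := by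
      intro i _
      rcases hp i with h | ⟨hb, hp0⟩
      · exact le_of_lt h
      · rw [hp0, hb]; simp
    have hlt : p (A r) < u (A r) (bundle A' (A r)) - u (A r) (bundle A (A r)) := by
      rcases hp (A r) with h | ⟨hb, _⟩
      · exact h
      · exact absurd hb hbne
    have := Finset.sum_lt_sum hle ⟨A r, Finset.mem_univ _, hlt⟩
    rw [hsum, Finset.sum_sub_distrib] at this
    unfold swu
    linarith
  · intro h
    set ε := (swu u A' - swu u A) / Fintype.card Agent with hε
    have hcard : (0 : ℝ) < Fintype.card Agent := by
      exact_mod_cast Fintype.card_pos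
    have hεpos : 0 < ε := div_pos (by linarith) hcard
    refine ⟨fun i => u i (bundle A' i) - u i (bundle A i) - ε, ?_, fun i => Or.inl (by dsimp only; linarith)⟩
    rw [Finset.sum_sub_distrib, Finset.sum_sub_distrib, Finset.sum_const, Finset.card_univ]
    show swu u A' - swu u A - _ = 0
    rw [nsmul_eq_mul, hε]
    field_simp
    ring
end

section
/- If agents only implement individually rational deals (deals (A, A') for which a payment function p exists with uᵢ(A') − uᵢ(A) > p(i) for all i, except possibly p(i)=0 when A(i)=A'(i)), then any maximal sequence of such deals is finite and terminates in an allocation with maximal utilitarian social welfare sw_u. -/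
variable {Agent Res : Type*} [Fintype Agent] [Fintype Res] [DecidableEq Agent]

/-- A deal is individually rational iff there is a payment function as in the paper. -/
def IndRational (u : Agent → Finset Res → ℝ) (A A' : Res → Agent) : Prop :=
  A ≠ A' ∧ ∃ p : Agent → ℝ, (∑ i, p i) = 0 ∧
    ∀ i, u i (bundle A' i) - u i (bundle A i) > p i ∨
      (bundle A i = bundle A' i ∧ p i = 0)

lemma indRational_iff (u : Agent → Finset Res → ℝ) (A A' : Res → Agent) :
    IndRational u A A' ↔ A ≠ A' ∧ swu u A < swu u A' := by
  constructor
  · rintro ⟨hne, p, hp0, hi⟩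
    refine ⟨hne, ?_⟩
    have hr : ∃ r, A r ≠ A' r := by
      by_contra h
      push_neg at h
      exact hne (funext h)
    obtain ⟨r, hr⟩ := hr
    have hlt : ∑ i, p i < ∑ i, (u i (bundle A' i) - u i (bundle A i)) := by
      apply Finset.sum_lt_sum
      · intro i _
        rcases hi i with h | ⟨hb, hp⟩
        · exact le_of_lt h
        · rw [hb, hp]; simp
      · refine ⟨A r, Finset.mem_univ _, ?_⟩
        rcases hi (A r) with h | ⟨hb, _⟩
        · exact h
        · exfalso
          have : r ∈ bundle A (A r) := by simp [bundle]
          rw [hb] at this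
          simp [bundle] at this
          exact hr this.symm
    rw [hp0, Finset.sum_sub_distrib] at hlt
    simpa [swu] using by linarith
  · rintro ⟨hne, hlt⟩
    refine ⟨hne, ?_⟩
    have hres : Nonempty Res := by
      by_contra h
      exact hne (funext fun r => absurd ⟨r⟩ h)
    have hagent : Nonempty Agent := ⟨A hres.some⟩
    set n : ℕ := Fintype.card Agent with hn
    have hnpos : 0 < (n : ℝ) := by
      exact_mod_cast Fintype.card_pos
    set d : ℝ := swu u A' - swu u A with hd
    have hdpos : 0 < d := by linarith
    refine ⟨fun i => (u i (bundle A' i) - u i (bundle A i)) - d / n, ?_, ?_⟩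
    · rw [Finset.sum_sub_distrib, Finset.sum_sub_distrib, Finset.sum_const,
        Finset.card_univ]
      have : (n : ℝ) * (d / n) = d := by field_simp
      simp only [nsmul_eq_mul]
      rw [this]
      simp only [swu] at hd
      linarith [hd]
    · intro i
      left
      have : 0 < d / n := div_pos hdpos hnpos
      linarith

/-- Any maximal sequence of individually rational deals is finite (there is no infinite
sequence of such deals) and any terminal allocation has maximal utilitarian social welfare. -/
theorem stmt1 (u : Agent → Finset Res → ℝ) :
    (¬ ∃ seq : ℕ → (Res → Agent), ∀ n, IndRational u (seq n) (seq (n + 1))) ∧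
    (∀ A : Res → Agent, (¬ ∃ A', IndRational u A A') →
      ∀ B : Res → Agent, swu u B ≤ swu u A) := by
  constructor
  · rintro ⟨seq, hseq⟩
    haveI := Classical.decEq Res
    have hmono : StrictMono fun n => swu u (seq n) := by
      apply strictMono_nat_of_lt_succ
      intro n
      exact ((indRational_iff u _ _).mp (hseq n)).2
    obtain ⟨m, k, hmk, heq⟩ := Finite.exists_ne_map_eq_of_infinite seq
    rcases hmk.lt_or_gt with h | h
    · exact absurd (congrArg (swu u) heq) (hmono h).ne
    · exact absurd (congrArg (swu u) heq.symm) (hmono h).ne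
  · intro A hA B
    by_contra h
    push_neg at h
    have hne : A ≠ B := fun he => by rw [he] at h; exact lt_irrefl _ h
    exact hA ⟨B, (indRational_iff u A B).mpr ⟨hne, h⟩⟩
end

section
/- Fix finite sets of agents 𝒜 and resources ℛ, and let δ = (A, A') be any deal that is not independently decomposable. Then there exist monotonic utility functions (uᵢ)_{i∈𝒜} such that sw_u(A') > sw_u(A) and sw_u(B) ≤ sw_u(A) for every allocation B ∉ {A, A'}; consequently, starting from initial allocation A, the deal δ is the unique individually rational deal, and hence any sequence of individually rational deals reaching an allocation of maximal utilitarian social welfare must include δ. -/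
variable {Agent Res : Type*} [Fintype Agent] [Fintype Res] [DecidableEq Agent] [DecidableEq Res]

/-- The set of agents involved in the deal (f, g): those whose bundle changes. -/
def involved (f g : Res → Agent) : Finset Agent :=
  Finset.univ.filter fun i => bundle f i ≠ bundle g i

/-- A deal (f, g) is independently decomposable iff it is the composition of two deals
involving disjoint sets of agents. -/
def IndDecomp (f g : Res → Agent) : Prop :=
  ∃ B : Res → Agent, B ≠ f ∧ B ≠ g ∧ Disjoint (involved f B) (involved B g)

lemma bundle_ext {f g : Res → Agent} (h : ∀ i, bundle f i = bundle g i) : f = g := by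
  funext r
  have h1 : r ∈ bundle f (f r) := by simp [bundle]
  rw [h] at h1
  exact ((Finset.mem_filter.mp h1).2).symm

lemma sum_card_bundle (f : Res → Agent) :
    ∑ i, ((bundle f i).card : ℝ) = (Fintype.card Res : ℝ) := by
  have h : (Finset.univ : Finset Res).card = ∑ i, (bundle f i).card :=
    Finset.card_eq_sum_card_fiberwise (fun x _ => Finset.mem_univ (f x))
  have := congrArg (fun n : ℕ => (n : ℝ)) h
  push_cast at this
  rw [← this, Finset.card_univ]

/-- Necessary deals with side payments (monotonic case): for every deal that is not
independently decomposable there are monotonic utility functions making that deal the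
unique individually rational deal from the initial allocation, hence necessary for
reaching maximal utilitarian social welfare. -/
theorem stmt2 (A A' : Res → Agent) (hne : A ≠ A') (hnd : ¬ IndDecomp A A') :
    ∃ u : Agent → Finset Res → ℝ,
      (∀ i, ∀ R₁ R₂ : Finset Res, R₁ ⊆ R₂ → u i R₁ ≤ u i R₂) ∧
      swu u A < swu u A' ∧
      (∀ B : Res → Agent, B ≠ A → B ≠ A' → swu u B ≤ swu u A) ∧
      (∀ B : Res → Agent, swu u A < swu u B → B = A') := by
  classical
  set C : ℝ := (Fintype.card Agent : ℝ) with hC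
  have hC0 : (0:ℝ) ≤ C := Nat.cast_nonneg _
  set u : Agent → Finset Res → ℝ := fun i R =>
    (C + 2) * R.card
      + (C + 1) * (if R = bundle A i ∨ R = bundle A' i then (1:ℝ) else 0)
      + (if R = bundle A' i then (1:ℝ) else 0) with hu
  -- generic bound on sums of agent-indexed quantities with one zero term
  have sum_bound : ∀ (g : Agent → ℝ) (M : ℝ), 0 ≤ M → (∀ i, g i ≤ M) →
      ∀ i₀ : Agent, g i₀ ≤ 0 → ∑ i, g i ≤ M * (C - 1) := by
    intro g M hM hg i₀ h0
    have h1 : ∑ i, g i ≤ ∑ i, (if i = i₀ then (0:ℝ) else M) := by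
      apply Finset.sum_le_sum
      intro i _
      split_ifs with h
      · exact h ▸ h0
      · exact hg i
    have h2 : ∑ i : Agent, (if i = i₀ then (0:ℝ) else M) = M * C - M := by
      have hcong : ∀ i : Agent, (if i = i₀ then (0:ℝ) else M)
          = M - (if i = i₀ then M else 0) := by
        intro i; split_ifs <;> ring
      rw [Finset.sum_congr rfl (fun i _ => hcong i), Finset.sum_sub_distrib,
        Finset.sum_const, Finset.sum_ite_eq' Finset.univ i₀ (fun _ => M)]
      simp [hC, Finset.card_univ, mul_comm]
    linarith
  -- expansion of social welfare
  have hswu : ∀ f : Res → Agent, swu u f =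
      (C+2) * (Fintype.card Res : ℝ)
      + ((C+1) * ∑ i, (if bundle f i = bundle A i ∨ bundle f i = bundle A' i then (1:ℝ) else 0)
      + ∑ i, (if bundle f i = bundle A' i then (1:ℝ) else 0)) := by
    intro f
    simp only [swu, hu]
    rw [Finset.sum_add_distrib, Finset.sum_add_distrib, ← Finset.mul_sum, ← Finset.mul_sum,
      sum_card_bundle]
    ring
  have hT1A : ∑ i, (if bundle A i = bundle A i ∨ bundle A i = bundle A' i then (1:ℝ) else 0)
      = C := by
    simp [hC, Finset.card_univ]
  have hT1A' : ∑ i, (if bundle A' i = bundle A i ∨ bundle A' i = bundle A' i then (1:ℝ) else 0)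
      = C := by
    simp [hC, Finset.card_univ]
  have hT2A' : ∑ i, (if bundle A' i = bundle A' i then (1:ℝ) else 0) = C := by
    simp [hC, Finset.card_univ]
  -- a witness agent whose bundle changes in the deal
  have hwit : ∃ i₀, bundle A i₀ ≠ bundle A' i₀ := by
    by_contra h
    push_neg at h
    exact hne (bundle_ext h)
  obtain ⟨iw, hiw⟩ := hwit
  have hT2A : ∑ i, (if bundle A i = bundle A' i then (1:ℝ) else 0) ≤ C - 1 := by
    have := sum_bound (fun i => if bundle A i = bundle A' i then (1:ℝ) else 0) 1
      (by norm_num) (fun i => by by_cases h : bundle A i = bundle A' i <;> simp [h]) iw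
      (by simp [hiw])
    simpa using this
  have hT2Anonneg : (0:ℝ) ≤ ∑ i, (if bundle A i = bundle A' i then (1:ℝ) else 0) :=
    Finset.sum_nonneg (fun i _ => by split_ifs <;> norm_num)
  -- deviant agent for allocations other than A and A'
  have hdev : ∀ B : Res → Agent, B ≠ A → B ≠ A' →
      ∃ i₀, bundle B i₀ ≠ bundle A i₀ ∧ bundle B i₀ ≠ bundle A' i₀ := by
    intro B hBA hBA'
    by_contra h
    push_neg at h
    apply hnd
    refine ⟨B, hBA, hBA', Finset.disjoint_left.mpr ?_⟩
    intro i hi hi'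
    simp only [involved, Finset.mem_filter, Finset.mem_univ, true_and] at hi hi'
    exact hi' (h i (Ne.symm hi))
  -- the main bound for other allocations
  have hother : ∀ B : Res → Agent, B ≠ A → B ≠ A' → swu u B ≤ swu u A := by
    intro B hBA hBA'
    obtain ⟨i₀, h1, h2⟩ := hdev B hBA hBA'
    have hsum : ∑ i, ((C+1) * (if bundle B i = bundle A i ∨ bundle B i = bundle A' i
          then (1:ℝ) else 0) + (if bundle B i = bundle A' i then (1:ℝ) else 0))
        ≤ (C+2) * (C-1) := by
      refine sum_bound _ (C+2) (by linarith) ?_ i₀ ?_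
      · intro i
        have b1 : (if bundle B i = bundle A i ∨ bundle B i = bundle A' i then (1:ℝ) else 0) ≤ 1 := by
          split_ifs <;> norm_num
        have b1' : (0:ℝ) ≤ (if bundle B i = bundle A i ∨ bundle B i = bundle A' i then (1:ℝ) else 0) := by
          split_ifs <;> norm_num
        have b2 : (if bundle B i = bundle A' i then (1:ℝ) else 0) ≤ 1 := by
          split_ifs <;> norm_num
        nlinarith
      · simp [h1, h2]
    have hsplit : ∑ i, ((C+1) * (if bundle B i = bundle A i ∨ bundle B i = bundle A' i
          then (1:ℝ) else 0) + (if bundle B i = bundle A' i then (1:ℝ) else 0))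
        = (C+1) * (∑ i, (if bundle B i = bundle A i ∨ bundle B i = bundle A' i then (1:ℝ) else 0))
          + ∑ i, (if bundle B i = bundle A' i then (1:ℝ) else 0) := by
      rw [Finset.sum_add_distrib, Finset.mul_sum]
    rw [hswu B, hswu A, hT1A]
    rw [hsplit] at hsum
    nlinarith
  refine ⟨u, ?_, ?_, hother, ?_⟩
  · -- monotonicity
    intro i R₁ R₂ hsub
    rcases eq_or_ne R₁ R₂ with rfl | hne'
    · exact le_refl _
    · have hcard : (R₁.card : ℝ) + 1 ≤ R₂.card := by
        exact_mod_cast Finset.card_lt_card (HasSubset.Subset.ssubset_of_ne hsub hne')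
      have hmul : (C+2) * ((R₁.card : ℝ) + 1) ≤ (C+2) * R₂.card :=
        mul_le_mul_of_nonneg_left hcard (by linarith)
      simp only [hu]
      split_ifs <;> nlinarith
  · -- swu u A < swu u A'
    rw [hswu A, hswu A', hT1A, hT1A', hT2A']
    linarith
  · -- uniqueness
    intro B hlt
    by_contra hBA'
    rcases eq_or_ne B A with rfl | hBA
    · exact lt_irrefl _ hlt
    · exact absurd hlt (not_lt.mpr (hother B hBA hBA'))
end

section
/- Fix finite sets of agents 𝒜 and resources ℛ, and let δ = (A, A') be any deal that is not independently decomposable. Then there exist dichotomous utility functions (uᵢ)_{i∈𝒜} (each uᵢ takes only values 0 and 1) such that sw_u(A') = |𝒜|, sw_u(A) = |𝒜| − 1, and sw_u(B) ≤ sw_u(A) for every allocation B ∉ {A, A'}; consequently δ is the unique deal increasing utilitarian social welfare from A. -/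
variable {Agent Res : Type*} [Fintype Agent] [Fintype Res] [DecidableEq Agent] [DecidableEq Res]

/-- Necessary deals with side payments (dichotomous case): for every deal that is not
independently decomposable there are dichotomous utility functions with
`sw_u(A') = |𝒜|`, `sw_u(A) = |𝒜| − 1`, all other allocations at most `sw_u(A)`,
so the deal is the unique deal increasing utilitarian social welfare from `A`. -/
theorem stmt3 (A A' : Res → Agent) (hne : A ≠ A') (hnd : ¬ IndDecomp A A') :
    ∃ u : Agent → Finset Res → ℝ,
      (∀ i, ∀ R : Finset Res, u i R = 0 ∨ u i R = 1) ∧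
      swu u A' = (Fintype.card Agent : ℝ) ∧
      swu u A = (Fintype.card Agent : ℝ) - 1 ∧
      (∀ B : Res → Agent, B ≠ A → B ≠ A' → swu u B ≤ swu u A) ∧
      (∀ B : Res → Agent, swu u A < swu u B → B = A') := by
  obtain ⟨r0, hr0⟩ : ∃ r, A r ≠ A' r := by
    by_contra h; push_neg at h; exact hne (funext h)
  set i₀ := A r0 with hi0
  have hbne : bundle A i₀ ≠ bundle A' i₀ := by
    intro h
    have h1 : r0 ∈ bundle A i₀ := by simp [bundle, hi0]
    rw [h] at h1
    simp [bundle] at h1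
    exact hr0 h1.symm
  set u : Agent → Finset Res → ℝ :=
    fun i R => if R = bundle A' i ∨ (i ≠ i₀ ∧ R = bundle A i) then 1 else 0 with hu
  have hdich : ∀ i, ∀ R : Finset Res, u i R = 0 ∨ u i R = 1 := by
    intro i R; simp only [hu]; split <;> simp
  have hle1 : ∀ i R, u i R ≤ 1 := by
    intro i R; rcases hdich i R with h | h <;> simp [h]
  have hA' : swu u A' = (Fintype.card Agent : ℝ) := by
    simp [swu, hu]
  have hcard : 1 ≤ Fintype.card Agent := by
    have : Nonempty Agent := ⟨i₀⟩
    exact Fintype.card_pos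
  have hA : swu u A = (Fintype.card Agent : ℝ) - 1 := by
    have hterm : ∀ i, u i (bundle A i) = if i = i₀ then 0 else 1 := by
      intro i
      by_cases h : i = i₀
      · subst h
        rw [if_pos rfl, hu]
        simp [hbne]
      · rw [if_neg h, hu]
        simp [h]
    rw [swu]
    simp only [hterm]
    rw [← Finset.add_sum_erase _ _ (Finset.mem_univ i₀), if_pos rfl, zero_add]
    rw [Finset.sum_congr rfl (fun i hi => if_neg (Finset.ne_of_mem_erase hi))]
    rw [Finset.sum_const, Finset.card_erase_of_mem (Finset.mem_univ i₀),
      nsmul_eq_mul, mul_one, Finset.card_univ, Nat.cast_sub hcard, Nat.cast_one]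
  have key : ∀ B : Res → Agent, B ≠ A → B ≠ A' → ∃ j, u j (bundle B j) = 0 := by
    intro B hBA hBA'
    by_contra h
    push_neg at h
    have hall : ∀ j, bundle B j = bundle A' j ∨ (j ≠ i₀ ∧ bundle B j = bundle A j) := by
      intro j
      by_contra hc
      exact h j (by rw [hu]; simp only [if_neg hc])
    apply hnd
    refine ⟨B, hBA, hBA', Finset.disjoint_left.mpr ?_⟩
    intro i hi hi'
    simp [involved] at hi hi'
    rcases hall i with hc | ⟨_, hc⟩
    · exact hi' hc
    · exact hi hc.symm
  have h4 : ∀ B : Res → Agent, B ≠ A → B ≠ A' → swu u B ≤ swu u A := by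
    intro B hBA hBA'
    obtain ⟨j, hj⟩ := key B hBA hBA'
    rw [hA, swu, ← Finset.add_sum_erase _ _ (Finset.mem_univ j), hj, zero_add]
    calc ∑ i ∈ Finset.univ.erase j, u i (bundle B i)
        ≤ ∑ i ∈ Finset.univ.erase j, 1 := Finset.sum_le_sum fun i _ => hle1 i _
      _ = (Fintype.card Agent : ℝ) - 1 := by
          rw [Finset.sum_const, Finset.card_erase_of_mem (Finset.mem_univ j),
            nsmul_eq_mul, mul_one, Finset.card_univ, Nat.cast_sub hcard, Nat.cast_one]
  refine ⟨u, hdich, hA', hA, h4, ?_⟩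
  intro B hlt
  by_contra hBA'
  by_cases hBA : B = A
  · subst hBA; exact lt_irrefl _ hlt
  · exact absurd hlt (not_lt.mpr (h4 B hBA hBA'))
end

section
/- In additive scenarios (all agents have additive utility functions), if an allocation A does not have maximal utilitarian social welfare, then there exists an individually rational 1-deal from A; consequently, any maximal sequence of individually rational 1-deals terminates in an allocation with maximal utilitarian social welfare. -/
variable {Agent Res : Type*} [Fintype Agent] [Fintype Res] [DecidableEq Agent]

/-- A 1-deal: exactly one resource changes hands. -/
def OneDeal (f g : Res → Agent) : Prop :=
  ∃ r, f r ≠ g r ∧ ∀ r', r' ≠ r → f r' = g r'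

/-- In additive scenarios: if an allocation does not have maximal utilitarian social
welfare then some individually rational 1-deal exists from it; moreover there is no
infinite sequence of individually rational 1-deals, and any terminal allocation has
maximal utilitarian social welfare. -/
theorem stmt4 (u : Agent → Finset Res → ℝ)
    (hadd : ∀ i (R : Finset Res), u i R = ∑ r ∈ R, u i {r}) :
    (∀ A : Res → Agent, (∃ B, swu u A < swu u B) →
        ∃ A', OneDeal A A' ∧ swu u A < swu u A') ∧
    (¬ ∃ seq : ℕ → (Res → Agent),
        ∀ n, OneDeal (seq n) (seq (n + 1)) ∧ swu u (seq n) < swu u (seq (n + 1))) ∧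
    (∀ A : Res → Agent, (¬ ∃ A', OneDeal A A' ∧ swu u A < swu u A') →
        ∀ B : Res → Agent, swu u B ≤ swu u A) := by
  classical
  have key : ∀ f : Res → Agent, swu u f = ∑ r, u (f r) {r} := by
    intro f
    unfold swu bundle
    rw [← Finset.sum_fiberwise Finset.univ f (fun r => u (f r) {r})]
    refine Finset.sum_congr rfl fun i _ => ?_
    rw [hadd]
    refine Finset.sum_congr rfl fun r hr => ?_
    simp only [Finset.mem_filter] at hr
    rw [hr.2]
  have part1 : ∀ A : Res → Agent, (∃ B, swu u A < swu u B) →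
      ∃ A', OneDeal A A' ∧ swu u A < swu u A' := by
    intro A ⟨B, hB⟩
    rw [key A, key B] at hB
    obtain ⟨r, -, hr⟩ := Finset.exists_lt_of_sum_lt hB
    refine ⟨Function.update A r (B r), ⟨r, ?_, ?_⟩, ?_⟩
    · simp only [Function.update_self]
      exact fun h => absurd (h ▸ hr) (lt_irrefl _)
    · intro r' hr'
      simp [Function.update_of_ne hr']
    · rw [key A, key (Function.update A r (B r))]
      refine Finset.sum_lt_sum (fun r' _ => ?_) ⟨r, Finset.mem_univ r, ?_⟩
      · rcases eq_or_ne r' r with h | h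
        · subst h; simpa using hr.le
        · simp [Function.update_of_ne h]
      · simpa using hr
  refine ⟨part1, ?_, ?_⟩
  · rintro ⟨seq, hseq⟩
    have hmono : StrictMono (fun n => swu u (seq n)) :=
      strictMono_nat_of_lt_succ fun n => (hseq n).2
    have h1 : (Set.range (fun n => swu u (seq n))).Infinite :=
      Set.infinite_range_of_injective hmono.injective
    have h2 : (Set.range (fun n => swu u (seq n))).Finite :=
      (Set.finite_range (swu u)).subset (by rintro x ⟨n, rfl⟩; exact ⟨seq n, rfl⟩)
    exact h1 h2
  · intro A hA B
    by_contra hB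
    exact hA (part1 A ⟨B, lt_of_not_ge hB⟩)
end

section
/- Any maximal sequence of cooperatively rational deals is finite and terminates in a Pareto optimal allocation: an allocation A from which no cooperatively rational deal is possible admits no allocation A' with sw_u(A) < sw_u(A') and uᵢ(A) ≤ uᵢ(A') for all agents i. -/
variable {Agent Res : Type*} [Fintype Agent] [Fintype Res] [DecidableEq Agent]

/-- Cooperative rationality: no agent loses utility and some agent strictly gains. -/
def CoopRational (u : Agent → Finset Res → ℝ) (A A' : Res → Agent) : Prop :=
  (∀ i, u i (bundle A i) ≤ u i (bundle A' i)) ∧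
  ∃ j, u j (bundle A j) < u j (bundle A' j)

/-- Any maximal sequence of cooperatively rational deals is finite and its terminal
allocation is Pareto optimal. -/
theorem stmt7 (u : Agent → Finset Res → ℝ) :
    (¬ ∃ seq : ℕ → (Res → Agent), ∀ n, CoopRational u (seq n) (seq (n + 1))) ∧
    (∀ A : Res → Agent, (¬ ∃ A', CoopRational u A A') →
      ¬ ∃ A' : Res → Agent,
          swu u A < swu u A' ∧ ∀ i, u i (bundle A i) ≤ u i (bundle A' i)) := by
  have key : ∀ A A' : Res → Agent, CoopRational u A A' → swu u A < swu u A' := by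
    rintro A A' ⟨h1, j, h2⟩
    exact Finset.sum_lt_sum (fun i _ => h1 i) ⟨j, Finset.mem_univ j, h2⟩
  constructor
  · rintro ⟨seq, hseq⟩
    have mono : StrictMono fun n => swu u (seq n) :=
      strictMono_nat_of_lt_succ fun n => key _ _ (hseq n)
    have fin : Set.Finite (Set.range fun n => swu u (seq n)) := by
      apply Set.Finite.subset (Set.finite_range (swu u))
      rintro x ⟨n, rfl⟩; exact ⟨seq n, rfl⟩
    exact Set.infinite_range_of_injective mono.injective fin
  · rintro A hA ⟨A', hlt, hle⟩
    apply hA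
    refine ⟨A', hle, ?_⟩
    by_contra h
    push_neg at h
    have : swu u A' ≤ swu u A := Finset.sum_le_sum fun i _ => h i
    linarith
end

section
/- In 0-1 scenarios (all utility functions additive with uᵢ({r}) ∈ {0,1} for every resource r), if an allocation A does not have maximal utilitarian social welfare, then there exist a resource r and agents i, j such that r ∈ A(i), uᵢ({r}) = 0 and u_j({r}) = 1, hence moving r from i to j is a cooperatively rational 1-deal; consequently, any maximal sequence of cooperatively rational 1-deals terminates in an allocation with maximal utilitarian social welfare. -/
variable {Agent Res : Type*} [Fintype Agent] [Fintype Res] [DecidableEq Agent] [DecidableEq Res]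

lemma swu_eq (u : Agent → Finset Res → ℝ)
    (hadd : ∀ i (R : Finset Res), u i R = ∑ r ∈ R, u i {r}) (f : Res → Agent) :
    swu u f = ∑ r, u (f r) {r} := by
  unfold swu
  have : ∀ i, u i (bundle f i) = ∑ r ∈ Finset.univ.filter (fun r => f r = i), u (f r) {r} := by
    intro i
    rw [hadd]
    apply Finset.sum_congr rfl
    intro r hr
    simp only [bundle, Finset.mem_filter] at hr
    rw [hr.2]
  simp_rw [this]
  exact Finset.sum_fiberwise _ _ _

lemma bundle_update (A : Res → Agent) (r : Res) (j : Agent) (i : Agent) :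
    bundle (Function.update A r j) i =
      if i = j then insert r (bundle A i) else (bundle A i).erase r := by
  ext r'
  simp only [bundle, Finset.mem_filter, Finset.mem_univ, true_and]
  by_cases hr : r' = r
  · subst hr
    simp [Function.update_self]
    split <;> simp_all [eq_comm]
  · rw [Function.update_of_ne hr]
    split <;> simp_all

/-- 0-1 scenarios: if an allocation is not of maximal utilitarian social welfare then some
agent holds a resource it values at 0 which another agent values at 1, and moving that
resource is a cooperatively rational 1-deal; consequently any terminal allocation for
cooperatively rational 1-deals has maximal utilitarian social welfare. -/
theorem stmt8 (u : Agent → Finset Res → ℝ)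
    (hadd : ∀ i (R : Finset Res), u i R = ∑ r ∈ R, u i {r})
    (h01 : ∀ i (r : Res), u i {r} = 0 ∨ u i {r} = 1) :
    (∀ A : Res → Agent, (∃ B, swu u A < swu u B) →
        ∃ (r : Res) (j : Agent), u (A r) {r} = 0 ∧ u j {r} = 1 ∧
          OneDeal A (Function.update A r j) ∧
          CoopRational u A (Function.update A r j)) ∧
    (∀ A : Res → Agent, (¬ ∃ A', OneDeal A A' ∧ CoopRational u A A') →
        ∀ B : Res → Agent, swu u B ≤ swu u A) := by
  have key : ∀ A : Res → Agent, (∃ B, swu u A < swu u B) →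
      ∃ (r : Res) (j : Agent), u (A r) {r} = 0 ∧ u j {r} = 1 ∧
        OneDeal A (Function.update A r j) ∧
        CoopRational u A (Function.update A r j) := by
    intro A ⟨B, hB⟩
    rw [swu_eq u hadd, swu_eq u hadd] at hB
    -- find r with u (A r) {r} < u (B r) {r}
    have : ∃ r : Res, u (A r) {r} < u (B r) {r} := by
      by_contra h
      push_neg at h
      exact absurd (Finset.sum_le_sum (fun r _ => h r)) (not_le.2 hB)
    obtain ⟨r, hr⟩ := this
    have hA0 : u (A r) {r} = 0 := by
      rcases h01 (A r) r with h | h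
      · exact h
      · rcases h01 (B r) r with h' | h' <;> rw [h, h'] at hr <;> linarith
    have hB1 : u (B r) {r} = 1 := by
      rcases h01 (B r) r with h | h
      · rw [hA0, h] at hr; linarith
      · exact h
    have hne : A r ≠ B r := by
      intro h; rw [h, hB1] at hA0; norm_num at hA0
    refine ⟨r, B r, hA0, hB1, ?_, ?_⟩
    · exact ⟨r, by simpa using hne, fun r' hr' => (Function.update_of_ne hr' _ _).symm⟩
    · have hles : ∀ i, u i (bundle A i) ≤ u i (bundle (Function.update A r (B r)) i) := by
        intro i
        rw [bundle_update]
        by_cases hij : i = B r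
        · subst hij
          rw [if_pos rfl, hadd, hadd, Finset.sum_insert (by simp [bundle, hne])]
          have := hB1
          linarith
        · rw [if_neg hij]
          by_cases hmem : r ∈ bundle A i
          · have hi : A r = i := by simpa [bundle] using hmem
            rw [hadd, hadd, Finset.sum_erase _ (by rw [← hi]; exact hA0)]
          · rw [Finset.erase_eq_of_notMem hmem]
      refine ⟨hles, B r, ?_⟩
      rw [bundle_update, if_pos rfl, hadd, hadd,
        Finset.sum_insert (by simp [bundle, hne])]
      have := hB1
      linarith
  refine ⟨key, fun A hno B => ?_⟩
  by_contra h
  push_neg at h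
  obtain ⟨r, j, _, _, hod, hcr⟩ := key A ⟨B, h⟩
  exact hno ⟨_, hod, hcr⟩
end

section
/- Every Pigou-Dalton transfer is an equitable deal: if deal δ = (A, A') involves exactly two agents i and j, is mean-preserving (uᵢ(A)+u_j(A) = uᵢ(A')+u_j(A')), and reduces inequality (|uᵢ(A')−u_j(A')| < |uᵢ(A)−u_j(A)|), then min{uᵢ(A), u_j(A)} < min{uᵢ(A'), u_j(A')}. -/
variable {Agent Res : Type*} [Fintype Agent] [Fintype Res] [DecidableEq Agent]

lemma min_half (a b : ℝ) : min a b = (a + b - |a - b|) / 2 := by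
  rcases le_total a b with h | h
  · rw [min_eq_left h, abs_of_nonpos (by linarith)]; ring
  · rw [min_eq_right h, abs_of_nonneg (by linarith)]; ring

/-- Every Pigou-Dalton transfer is an equitable deal: a mean-preserving,
inequality-reducing deal involving exactly two agents strictly increases the minimum
utility among the two agents involved. -/
theorem stmt9 (u : Agent → Finset Res → ℝ) (A A' : Res → Agent) (i j : Agent)
    (hij : i ≠ j)
    (hinv : ∀ k, k ≠ i → k ≠ j → bundle A k = bundle A' k)
    (hi : bundle A i ≠ bundle A' i) (hj : bundle A j ≠ bundle A' j)
    (hmean : u i (bundle A i) + u j (bundle A j) = u i (bundle A' i) + u j (bundle A' j))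
    (hineq : |u i (bundle A' i) - u j (bundle A' j)| < |u i (bundle A i) - u j (bundle A j)|) :
    min (u i (bundle A i)) (u j (bundle A j)) <
      min (u i (bundle A' i)) (u j (bundle A' j)) := by
  rw [min_half, min_half]
  linarith
end

section
/- Maximin-rise implies equitability: if allocations A and A' satisfy sw_e(A) < sw_e(A'), where sw_e(A) = min_{i∈𝒜} uᵢ(A(i)), then the deal (A, A') is equitable, i.e., min{uᵢ(A(i)) | i ∈ 𝒜^δ} < min{uᵢ(A'(i)) | i ∈ 𝒜^δ}, where 𝒜^δ = {i | A(i) ≠ A'(i)}. -/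
variable {Agent Res : Type*} [Fintype Agent] [Fintype Res] [DecidableEq Agent] [DecidableEq Res] [Nonempty Agent]

/-- Egalitarian social welfare: the utility of the worst-off agent. -/
def swe (u : Agent → Finset Res → ℝ) (f : Res → Agent) : ℝ :=
  Finset.univ.inf' Finset.univ_nonempty fun i => u i (bundle f i)

/-- Maximin-rise implies equitability: if egalitarian social welfare strictly increases
from A to A', then the minimum utility among the agents involved in the deal (those whose
bundle changes) strictly increases. -/
theorem stmt10 (u : Agent → Finset Res → ℝ) (A A' : Res → Agent)
    (hD : (Finset.univ.filter fun i => bundle A i ≠ bundle A' i).Nonempty)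
    (h : swe u A < swe u A') :
    (Finset.univ.filter fun i => bundle A i ≠ bundle A' i).inf' hD
        (fun i => u i (bundle A i)) <
      (Finset.univ.filter fun i => bundle A i ≠ bundle A' i).inf' hD
        (fun i => u i (bundle A' i)) := by
  obtain ⟨j, -, hje⟩ := Finset.exists_mem_eq_inf' (Finset.univ_nonempty (α := Agent))
      (fun i => u i (bundle A i))
  have hjD : j ∈ Finset.univ.filter fun i => bundle A i ≠ bundle A' i := by
    by_contra hn
    simp only [Finset.mem_filter, Finset.mem_univ, true_and, not_not] at hn
    have h1 : swe u A' ≤ u j (bundle A' j) :=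
      Finset.inf'_le _ (Finset.mem_univ j)
    rw [← hn, ← hje] at h1
    exact absurd (h1.trans_lt h) (lt_irrefl _)
  calc (Finset.univ.filter fun i => bundle A i ≠ bundle A' i).inf'
        hD (fun i => u i (bundle A i)) ≤ u j (bundle A j) := Finset.inf'_le _ hjD
    _ = swe u A := hje.symm
    _ < swe u A' := h
    _ ≤ _ := by
        apply Finset.le_inf'
        intro i _
        exact Finset.inf'_le _ (Finset.mem_univ i)
end

section
/- Equitability implies leximin-rise: if δ = (A, A') is an equitable deal, then A ≺ A' in the leximin ordering, i.e., the ordered (non-decreasing) utility vector of A lexicographically precedes that of A'. -/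
variable {Agent Res : Type*} [Fintype Agent] [Fintype Res] [DecidableEq Agent] [DecidableEq Res]

/-- The ordered utility vector: the utilities of all agents sorted increasingly. -/
noncomputable def vec (u : Agent → Finset Res → ℝ) (f : Res → Agent) : List ℝ :=
  (Finset.univ.val.map fun i => u i (bundle f i)).sort (· ≤ ·)

/-- A deal is equitable iff the minimum utility among the (nonempty set of) agents whose
bundle changes strictly increases. -/
def Equitable (u : Agent → Finset Res → ℝ) (A A' : Res → Agent) : Prop :=
  ∃ hD : (Finset.univ.filter fun i => bundle A i ≠ bundle A' i).Nonempty,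
    (Finset.univ.filter fun i => bundle A i ≠ bundle A' i).inf' hD
        (fun i => u i (bundle A i)) <
      (Finset.univ.filter fun i => bundle A i ≠ bundle A' i).inf' hD
        (fun i => u i (bundle A' i))

lemma key_lex (m : ℝ) : ∀ (l l' : List ℝ), l.Pairwise (· ≤ ·) → l'.Pairwise (· ≤ ·) →
    l.length = l'.length →
    (∀ x, x < m → l.count x = l'.count x) →
    l'.count m < l.count m →
    List.Lex (· < ·) l l' := by
  intro l
  induction l with
  | nil => intro l' _ _ _ _ hm; simp at hm
  | cons a t ih =>
    intro l' hs hs' hlen hc hm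
    cases l' with
    | nil => simp at hlen
    | cons b t' =>
      rw [List.pairwise_cons] at hs hs'
      obtain ⟨ha, ht⟩ := hs
      obtain ⟨hb, ht'⟩ := hs'
      rcases lt_trichotomy a m with ham | ham | ham
      · -- a < m : show b = a, recurse
        have hain : a ∈ b :: t' := by
          have h1 : 0 < (b :: t').count a := by
            rw [← hc a ham]; simp [List.count_cons]
          exact List.count_pos_iff.mp h1
        have hba : b ≤ a := by
          rcases List.mem_cons.mp hain with h | h
          · exact h.ge
          · exact hb _ h
        have hbm : b < m := lt_of_le_of_lt hba ham
        have hbin : b ∈ a :: t := by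
          have h1 : 0 < (a :: t).count b := by
            rw [hc b hbm]; simp [List.count_cons]
          exact List.count_pos_iff.mp h1
        have hab : a ≤ b := by
          rcases List.mem_cons.mp hbin with h | h
          · exact h.ge
          · exact ha _ h
        have heq : b = a := le_antisymm hba hab
        subst heq
        exact List.Lex.cons (ih t' ht ht' (by simpa using hlen)
          (fun x hx => by
            have := hc x hx
            simp [List.count_cons] at this
            omega)
          (by
            have := hm
            simp [List.count_cons] at this ⊢
            omega))
      · -- a = m
        subst ham
        rcases lt_trichotomy b a with hba | hba | hba
        · -- b < a = m : contradiction
          exfalso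
          have hbin : b ∈ a :: t := by
            have h1 : 0 < (a :: t).count b := by
              rw [hc b hba]; simp [List.count_cons]
            exact List.count_pos_iff.mp h1
          rcases List.mem_cons.mp hbin with h | h
          · exact absurd h (ne_of_lt hba)
          · exact absurd (ha _ h) (not_le.mpr hba)
        · -- b = a = m : recurse
          subst hba
          exact List.Lex.cons (ih t' ht ht' (by simpa using hlen)
            (fun x hx => by
              have := hc x hx
              simp [List.count_cons] at this
              omega)
            (by
              simp [List.count_cons] at hm
              omega))
        · exact List.Lex.rel hba
      · -- a > m : contradiction
        exfalso
        have : a ∉ (a :: t) ∨ True := Or.inr trivial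
        have hnm : m ∉ a :: t := by
          intro hmem
          rcases List.mem_cons.mp hmem with h | h
          · exact absurd h.symm (ne_of_gt ham)
          · exact absurd (ha _ h) (not_le.mpr ham)
        have : (a :: t).count m = 0 := List.count_eq_zero.mpr hnm
        omega


lemma count_vec (u : Agent → Finset Res → ℝ) (f : Res → Agent) (x : ℝ) :
    (vec u f).count x = (Finset.univ.filter fun i => x = u i (bundle f i)).card := by
  have h1 : ((vec u f : List ℝ) : Multiset ℝ)
      = Finset.univ.val.map fun i => u i (bundle f i) := Multiset.sort_eq _ _
  have h2 : (vec u f).count x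
      = Multiset.count x ((vec u f : List ℝ) : Multiset ℝ) := by
    simp
  rw [h2, h1, Multiset.count_map]
  rw [Finset.card, Finset.filter_val]

/-- Equitability implies leximin-rise: the sorted utility vector of A strictly
lexicographically precedes that of A'. -/
theorem stmt11 (u : Agent → Finset Res → ℝ) (A A' : Res → Agent)
    (h : Equitable u A A') :
    List.Lex (· < ·) (vec u A) (vec u A') := by
  obtain ⟨hD, hlt⟩ := h
  set D := Finset.univ.filter fun i => bundle A i ≠ bundle A' i with hDdef
  set m := D.inf' hD (fun i => u i (bundle A i)) with hm
  set m' := D.inf' hD (fun i => u i (bundle A' i)) with hm'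
  -- facts
  have hfm : ∀ i ∈ D, m ≤ u i (bundle A i) := fun i hi => Finset.inf'_le _ hi
  have hgm : ∀ i ∈ D, m' ≤ u i (bundle A' i) := fun i hi => Finset.inf'_le _ hi
  have hunch : ∀ i, i ∉ D → u i (bundle A i) = u i (bundle A' i) := by
    intro i hi
    have : ¬ (bundle A i ≠ bundle A' i) := by
      intro hne
      exact hi (Finset.mem_filter.mpr ⟨Finset.mem_univ i, hne⟩)
    rw [not_not.mp this]
  apply key_lex m
  · exact Multiset.pairwise_sort _ _
  · exact Multiset.pairwise_sort _ _
  · simp [vec]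
  · intro x hx
    rw [count_vec, count_vec]
    congr 1
    apply Finset.filter_congr
    intro i _
    by_cases hi : i ∈ D
    · constructor
      · intro hxe
        exfalso
        have := hfm i hi
        rw [← hxe] at this
        exact absurd this (not_le.mpr hx)
      · intro hxe
        exfalso
        have := hgm i hi
        rw [← hxe] at this
        exact absurd this (not_le.mpr (lt_trans hx hlt))
    · simp [hunch i hi]
  · rw [count_vec, count_vec]
    apply Finset.card_lt_card
    constructor
    · intro i hi
      simp only [Finset.mem_filter] at hi ⊢
      refine ⟨hi.1, ?_⟩
      by_cases hiD : i ∈ D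
      · exfalso
        have := hgm i hiD
        rw [← hi.2] at this
        exact absurd this (not_le.mpr hlt)
      · rw [hunch i hiD]; exact hi.2
    · intro hsub
      obtain ⟨i0, hi0D, hi0⟩ := Finset.exists_mem_eq_inf' hD (fun i => u i (bundle A i))
      have hi0mem : i0 ∈ Finset.univ.filter fun i => m = u i (bundle A i) := by
        simp only [Finset.mem_filter]
        exact ⟨Finset.mem_univ i0, hi0⟩
      have := hsub hi0mem
      simp only [Finset.mem_filter] at this
      have := this.2
      have h2 := hgm i0 hi0D
      rw [← this] at h2
      exact absurd h2 (not_le.mpr hlt)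
end

section
/- Any maximal sequence of equitable deals is finite and terminates in an allocation with maximal egalitarian social welfare sw_e(A) = min_{i∈𝒜} uᵢ(A(i)). -/
variable {Agent Res : Type*} [Fintype Agent] [Fintype Res] [DecidableEq Agent] [DecidableEq Res] [Nonempty Agent]

/-- There is a real-valued potential that strictly increases along equitable deals. -/
lemma exists_potential (u : Agent → Finset Res → ℝ) :
    ∃ φ : (Res → Agent) → ℝ, ∀ A A', Equitable u A A' → φ A < φ A' := by
  classical
  set n : ℝ := (Fintype.card Agent : ℝ) with hn
  have hn1 : (1 : ℝ) ≤ n := by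
    have : 1 ≤ Fintype.card Agent := Fintype.card_pos
    rw [hn]; exact_mod_cast this
  set V : Finset ℝ :=
    Finset.image (fun p : Agent × (Res → Agent) => u p.1 (bundle p.2 p.1)) Finset.univ with hV
  set c : ℝ := 1 + ∑ p ∈ V ×ˢ V, |Real.log n / (p.2 - p.1)| with hc
  have hsumnn : 0 ≤ ∑ p ∈ V ×ˢ V, |Real.log n / (p.2 - p.1)| :=
    Finset.sum_nonneg fun p _ => abs_nonneg _
  have hc0 : 0 < c := by rw [hc]; linarith
  have hkey : ∀ v ∈ V, ∀ w ∈ V, v < w → n * Real.exp (-c * w) < Real.exp (-c * v) := by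
    intro v hv w hw hvw
    have hpos : 0 < w - v := by linarith
    have h1 : Real.log n / (w - v) < c := by
      have hmem : ((v, w) : ℝ × ℝ) ∈ V ×ˢ V := Finset.mem_product.mpr ⟨hv, hw⟩
      have h2 : |Real.log n / (w - v)| ≤ ∑ p ∈ V ×ˢ V, |Real.log n / (p.2 - p.1)| :=
        Finset.single_le_sum (f := fun p : ℝ × ℝ => |Real.log n / (p.2 - p.1)|)
          (fun p _ => abs_nonneg _) hmem
      have h3 : Real.log n / (w - v) ≤ |Real.log n / (w - v)| := le_abs_self _
      rw [hc]; linarith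
    have h3 : Real.log n < c * (w - v) := (div_lt_iff₀ hpos).mp h1
    have h4 : n < Real.exp (c * (w - v)) := by
      rw [← Real.exp_log (by linarith : (0 : ℝ) < n)]
      exact Real.exp_lt_exp.mpr h3
    calc n * Real.exp (-c * w) < Real.exp (c * (w - v)) * Real.exp (-c * w) :=
          mul_lt_mul_of_pos_right h4 (Real.exp_pos _)
      _ = Real.exp (-c * v) := by rw [← Real.exp_add]; congr 1; ring
  refine ⟨fun f => -∑ i, Real.exp (-c * u i (bundle f i)), ?_⟩
  rintro A A' ⟨hD, hlt⟩
  set D := Finset.univ.filter fun i => bundle A i ≠ bundle A' i with hDdef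
  rw [neg_lt_neg_iff]
  have hsplit : ∀ f : Res → Agent, ∑ i, Real.exp (-c * u i (bundle f i)) =
      ∑ i ∈ D, Real.exp (-c * u i (bundle f i)) +
        ∑ i ∈ Dᶜ, Real.exp (-c * u i (bundle f i)) :=
    fun f => (Finset.sum_add_sum_compl D _).symm
  rw [hsplit A, hsplit A']
  have hcompl : ∑ i ∈ Dᶜ, Real.exp (-c * u i (bundle A' i)) =
      ∑ i ∈ Dᶜ, Real.exp (-c * u i (bundle A i)) := by
    apply Finset.sum_congr rfl
    intro i hi
    have h := Finset.mem_compl.mp hi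
    simp only [hDdef, Finset.mem_filter, Finset.mem_univ, true_and, not_not] at h
    rw [h]
  rw [hcompl]
  apply (add_lt_add_iff_right _).mpr
  set m := D.inf' hD fun i => u i (bundle A i) with hm
  set m' := D.inf' hD fun i => u i (bundle A' i) with hm'
  obtain ⟨j, hj, hjm⟩ := Finset.exists_mem_eq_inf' hD fun i => u i (bundle A i)
  obtain ⟨j', hj', hjm'⟩ := Finset.exists_mem_eq_inf' hD fun i => u i (bundle A' i)
  have hmV : m ∈ V := Finset.mem_image.mpr ⟨(j, A), Finset.mem_univ _, hjm.symm⟩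
  have hm'V : m' ∈ V := Finset.mem_image.mpr ⟨(j', A'), Finset.mem_univ _, hjm'.symm⟩
  have step1 : ∑ i ∈ D, Real.exp (-c * u i (bundle A' i)) ≤ (D.card : ℝ) * Real.exp (-c * m') := by
    have := Finset.sum_le_card_nsmul D (fun i => Real.exp (-c * u i (bundle A' i)))
      (Real.exp (-c * m')) (fun i hi => by
        have hle : m' ≤ u i (bundle A' i) := Finset.inf'_le _ hi
        exact Real.exp_le_exp.mpr (by nlinarith))
    simpa [nsmul_eq_mul] using this
  have step2 : (D.card : ℝ) * Real.exp (-c * m') ≤ n * Real.exp (-c * m') := by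
    have hcard : (D.card : ℝ) ≤ n := by
      rw [hn]; exact_mod_cast Finset.card_le_univ D
    exact mul_le_mul_of_nonneg_right hcard (Real.exp_pos _).le
  have step3 : n * Real.exp (-c * m') < Real.exp (-c * m) := hkey m hmV m' hm'V hlt
  have step4 : Real.exp (-c * m) ≤ ∑ i ∈ D, Real.exp (-c * u i (bundle A i)) := by
    have := Finset.single_le_sum (f := fun i => Real.exp (-c * u i (bundle A i)))
      (fun i _ => (Real.exp_pos _).le) hj
    rw [hm, hjm]
    exact this
  linarith

/-- Any maximal sequence of equitable deals is finite and terminates in an allocation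
with maximal egalitarian social welfare. -/
theorem stmt12 (u : Agent → Finset Res → ℝ) :
    (¬ ∃ seq : ℕ → (Res → Agent), ∀ n, Equitable u (seq n) (seq (n + 1))) ∧
    (∀ A : Res → Agent, (¬ ∃ A', Equitable u A A') →
      ∀ B : Res → Agent, swe u B ≤ swe u A) := by
  constructor
  · rintro ⟨seq, hseq⟩
    obtain ⟨φ, hφ⟩ := exists_potential u
    have hmono : StrictMono (φ ∘ seq) := strictMono_nat_of_lt_succ fun n => hφ _ _ (hseq n)
    obtain ⟨a, b, hab, heq⟩ := Finite.exists_ne_map_eq_of_infinite seq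
    exact hab (hmono.injective (by simp [Function.comp, heq]))
  · intro A hA B
    by_contra hswe
    push_neg at hswe
    apply hA
    refine ⟨B, ?_⟩
    obtain ⟨j, hj, hjm⟩ := Finset.exists_mem_eq_inf' (Finset.univ_nonempty (α := Agent))
      (fun i => u i (bundle A i))
    have hjm' : swe u A = u j (bundle A j) := hjm
    have hjD : bundle A j ≠ bundle B j := by
      intro h
      have h1 : swe u B ≤ u j (bundle B j) := Finset.inf'_le _ (Finset.mem_univ j)
      rw [← h, ← hjm'] at h1
      exact absurd h1 (not_le.mpr hswe)
    have hD : (Finset.univ.filter fun i => bundle A i ≠ bundle B i).Nonempty :=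
      ⟨j, Finset.mem_filter.mpr ⟨Finset.mem_univ _, hjD⟩⟩
    refine ⟨hD, ?_⟩
    have hjmem : j ∈ Finset.univ.filter fun i => bundle A i ≠ bundle B i :=
      Finset.mem_filter.mpr ⟨Finset.mem_univ _, hjD⟩
    have h1 : (Finset.univ.filter fun i => bundle A i ≠ bundle B i).inf' hD
        (fun i => u i (bundle A i)) ≤ u j (bundle A j) :=
      Finset.inf'_le _ hjmem
    have h2 : swe u B ≤ (Finset.univ.filter fun i => bundle A i ≠ bundle B i).inf' hD
        (fun i => u i (bundle B i)) :=
      Finset.le_inf' _ _ fun i _ => Finset.inf'_le _ (Finset.mem_univ i)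
    calc (Finset.univ.filter fun i => bundle A i ≠ bundle B i).inf' hD
          (fun i => u i (bundle A i)) ≤ u j (bundle A j) := h1
      _ = swe u A := hjm'.symm
      _ < swe u B := hswe
      _ ≤ _ := h2
end

section
/- Every Pigou-Dalton transfer yields a Lorenz improvement: if deal (A, A') involves exactly two agents i and j (all other agents' utilities unchanged), is mean-preserving (uᵢ(A)+u_j(A) = uᵢ(A')+u_j(A')), and reduces inequality (|uᵢ(A')−u_j(A')| < |uᵢ(A)−u_j(A)|), then A is Lorenz dominated by A'. -/
noncomputable def psumAux (k : ℕ) (M : Multiset ℝ) : ℝ := ((M.sort (· ≤ ·)).take k).sum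

lemma take_cons_le (a : ℝ) (l : List ℝ) (hl : (a :: l).Pairwise (· ≤ ·))
    {k : ℕ} (hk : k ≤ l.length) : ((a :: l).take k).sum ≤ (l.take k).sum := by
  cases k with
  | zero => simp
  | succ m =>
    have hm : m < l.length := hk
    rw [List.take_succ_cons, List.sum_cons, List.sum_take_succ l m hm]
    have hle : a ≤ l[m] := (List.pairwise_cons.1 hl).1 _ (List.getElem_mem hm)
    linarith

lemma sum_take_le_of_sublist : ∀ {t l : List ℝ}, List.Sublist t l → l.Pairwise (· ≤ ·) →
    (l.take t.length).sum ≤ t.sum := by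
  intro t l h
  induction h with
  | slnil => simp
  | cons a h ih =>
    intro hl
    calc ((_ :: _).take _).sum ≤ _ := take_cons_le _ _ hl h.length_le
    _ ≤ _ := ih (List.pairwise_cons.1 hl).2
  | cons_cons a h ih =>
    intro hl
    rw [List.length_cons, List.take_succ_cons, List.sum_cons, List.sum_cons]
    exact add_le_add_right (ih (List.pairwise_cons.1 hl).2) a

lemma psumAux_le_sum {M T : Multiset ℝ} (h : T ≤ M) : psumAux T.card M ≤ T.sum := by
  have hsub : List.Sublist (T.sort (· ≤ ·)) (M.sort (· ≤ ·)) := by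
    apply List.sublist_of_subperm_of_pairwise _ (T.pairwise_sort _) (M.pairwise_sort _)
    rw [← Multiset.coe_le, Multiset.sort_eq, Multiset.sort_eq]; exact h
  have h1 := sum_take_le_of_sublist hsub (M.pairwise_sort _)
  rw [Multiset.length_sort] at h1
  have h2 : (T.sort (· ≤ ·)).sum = T.sum := by
    conv_rhs => rw [← Multiset.sort_eq T (· ≤ ·), Multiset.sum_coe]
  rw [← h2]; exact h1

lemma coe_take_le (M : Multiset ℝ) (k : ℕ) :
    (↑((M.sort (· ≤ ·)).take k) : Multiset ℝ) ≤ M := by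
  conv_rhs => rw [← Multiset.sort_eq M (· ≤ ·)]
  exact Multiset.coe_le.2 (List.take_sublist _ _).subperm

lemma psumAux_of_card_le {M : Multiset ℝ} {k : ℕ} (h : Multiset.card M ≤ k) :
    psumAux k M = M.sum := by
  unfold psumAux
  rw [List.take_of_length_le (by rwa [Multiset.length_sort])]
  conv_rhs => rw [← Multiset.sort_eq M (· ≤ ·), Multiset.sum_coe]

lemma key_le (M₀ : Multiset ℝ) {a b a' b' : ℝ} (haa : a ≤ a') (hab : a ≤ b')
    (_hbb : b' ≤ b) (_hab' : a' ≤ b) (hs : a + b = a' + b') (k : ℕ) :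
    psumAux k (a ::ₘ b ::ₘ M₀) ≤ psumAux k (a' ::ₘ b' ::ₘ M₀) := by
  set M := a ::ₘ b ::ₘ M₀ with hM
  set M' := a' ::ₘ b' ::ₘ M₀ with hM'
  have hsumM : M.sum = M'.sum := by simp [hM, hM']; linarith
  rcases le_or_gt (Multiset.card M') k with hk | hk
  · rw [psumAux_of_card_le (by simpa [hM, hM'] using hk), psumAux_of_card_le hk, hsumM]
  · set T' : Multiset ℝ := ↑((M'.sort (· ≤ ·)).take k) with hT'
    have hT'M : T' ≤ M' := coe_take_le M' k
    have hcardT' : Multiset.card T' = k := by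
      simp only [hT', Multiset.coe_card, List.length_take, Multiset.length_sort]
      omega
    have hsumT' : T'.sum = psumAux k M' := Multiset.sum_coe _
    have hMeA : M'.erase a' = b' ::ₘ M₀ := Multiset.erase_cons_head _ _
    have key : ∃ T, T ≤ M ∧ Multiset.card T = k ∧ T.sum ≤ T'.sum := by
      by_cases ha' : a' ∈ T'
      · by_cases hb' : b' ∈ T'.erase a'
        · have e : a' ::ₘ b' ::ₘ ((T'.erase a').erase b') = T' := by
            rw [Multiset.cons_erase hb', Multiset.cons_erase ha']
          refine ⟨a ::ₘ b ::ₘ (T'.erase a').erase b', ?_, ?_, ?_⟩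
          · refine Multiset.cons_le_cons _ (Multiset.cons_le_cons _ ?_)
            have h := Multiset.erase_le_erase b' (Multiset.erase_le_erase a' hT'M)
            rwa [hMeA, Multiset.erase_cons_head] at h
          · rw [← hcardT', ← e]; simp
          · rw [← e]; simp; linarith
        · have e : a' ::ₘ (T'.erase a') = T' := Multiset.cons_erase ha'
          have hS : T'.erase a' ≤ M₀ := by
            have h1 : T'.erase a' ≤ b' ::ₘ M₀ := hMeA ▸ Multiset.erase_le_erase a' hT'M
            have h2 := Multiset.erase_le_erase b' h1
            rwa [Multiset.erase_of_notMem hb', Multiset.erase_cons_head] at h2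
          refine ⟨a ::ₘ T'.erase a', ?_, ?_, ?_⟩
          · exact Multiset.cons_le_cons _ (le_trans hS (Multiset.le_cons_self _ _))
          · rw [← hcardT', ← e]; simp
          · rw [← e]; simp; linarith
      · have h3 : T' ≤ b' ::ₘ M₀ := by
          have h := Multiset.erase_le_erase a' hT'M
          rwa [Multiset.erase_of_notMem ha', hMeA] at h
        by_cases hb2 : b' ∈ T'
        · have e : b' ::ₘ (T'.erase b') = T' := Multiset.cons_erase hb2
          have hS : T'.erase b' ≤ M₀ := by
            have h := Multiset.erase_le_erase b' h3
            rwa [Multiset.erase_cons_head] at h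
          refine ⟨a ::ₘ T'.erase b', ?_, ?_, ?_⟩
          · exact Multiset.cons_le_cons _ (le_trans hS (Multiset.le_cons_self _ _))
          · rw [← hcardT', ← e]; simp
          · rw [← e]; simp; linarith
        · have hS : T' ≤ M₀ := by
            have h := Multiset.erase_le_erase b' h3
            rwa [Multiset.erase_of_notMem hb2, Multiset.erase_cons_head] at h
          exact ⟨T', le_trans hS (le_trans (Multiset.le_cons_self _ _)
            (Multiset.le_cons_self _ _)), hcardT', le_refl _⟩
    obtain ⟨T, hTM, hcard, hsum⟩ := key
    calc psumAux k M = psumAux (Multiset.card T) M := by rw [hcard]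
      _ ≤ T.sum := psumAux_le_sum hTM
      _ ≤ T'.sum := hsum
      _ = psumAux k M' := hsumT'

lemma key_strict (M₀ : Multiset ℝ) {a b a' b' : ℝ} (h1 : a < a') (h2 : a' ≤ b') (h3 : b' < b)
    (hs : a + b = a' + b') :
    (∀ k, psumAux k (a ::ₘ b ::ₘ M₀) ≤ psumAux k (a' ::ₘ b' ::ₘ M₀)) ∧
    ∃ k, psumAux k (a ::ₘ b ::ₘ M₀) < psumAux k (a' ::ₘ b' ::ₘ M₀) := by
  have hle : ∀ k, psumAux k (a ::ₘ b ::ₘ M₀) ≤ psumAux k (a' ::ₘ b' ::ₘ M₀) :=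
    fun k => key_le M₀ h1.le (by linarith) h3.le (by linarith) hs k
  refine ⟨hle, ?_⟩
  by_contra hc
  push_neg at hc
  have heq : ∀ k, psumAux k (a ::ₘ b ::ₘ M₀) = psumAux k (a' ::ₘ b' ::ₘ M₀) :=
    fun k => le_antisymm (hle k) (hc k)
  set l := (a ::ₘ b ::ₘ M₀).sort (· ≤ ·) with hl
  set l' := (a' ::ₘ b' ::ₘ M₀).sort (· ≤ ·) with hl'
  have hlen : l.length = l'.length := by simp [hl, hl', Multiset.length_sort]
  have hll : l = l' := by
    apply List.ext_getElem hlen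
    intro n hn1 hn2
    have e1 := List.sum_take_succ l n hn1
    have e2 := List.sum_take_succ l' n hn2
    have q1 := heq n
    have q2 := heq (n + 1)
    unfold psumAux at q1 q2
    rw [← hl, ← hl'] at q1 q2
    linarith
  have hMM : (a ::ₘ b ::ₘ M₀) = (a' ::ₘ b' ::ₘ M₀) := by
    rw [← Multiset.sort_eq (a ::ₘ b ::ₘ M₀) (· ≤ ·), ← Multiset.sort_eq (a' ::ₘ b' ::ₘ M₀) (· ≤ ·),
      ← hl, ← hl', hll]
  have hcnt := congrArg (Multiset.count a) hMM
  rw [Multiset.count_cons_self, Multiset.count_cons_of_ne (by linarith : a ≠ b),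
    Multiset.count_cons_of_ne (by linarith : a ≠ a'),
    Multiset.count_cons_of_ne (by linarith : a ≠ b')] at hcnt
  omega

lemma key_strict' (M₀ : Multiset ℝ) {a b a' b' : ℝ} (hs : a + b = a' + b')
    (hd : |a' - b'| < |a - b|) :
    (∀ k, psumAux k (a ::ₘ b ::ₘ M₀) ≤ psumAux k (a' ::ₘ b' ::ₘ M₀)) ∧
    ∃ k, psumAux k (a ::ₘ b ::ₘ M₀) < psumAux k (a' ::ₘ b' ::ₘ M₀) := by
  rw [abs_sub_comm a' b', abs_sub_comm a b, ← max_sub_min_eq_abs a' b',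
    ← max_sub_min_eq_abs a b] at hd
  have hs' : min a b + max a b = min a' b' + max a' b' := by
    rw [min_add_max, min_add_max]; exact hs
  have hm1 : min a b ≤ max a b := min_le_max
  have hm2 : min a' b' ≤ max a' b' := min_le_max
  have h1 : min a b < min a' b' := by linarith
  have h3 : max a' b' < max a b := by linarith
  have key := key_strict M₀ h1 hm2 h3 hs'
  have e1 : (min a b ::ₘ max a b ::ₘ M₀) = a ::ₘ b ::ₘ M₀ := by
    rcases le_total a b with h | h
    · rw [min_eq_left h, max_eq_right h]
    · rw [min_eq_right h, max_eq_left h]; exact Multiset.cons_swap _ _ _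
  have e2 : (min a' b' ::ₘ max a' b' ::ₘ M₀) = a' ::ₘ b' ::ₘ M₀ := by
    rcases le_total a' b' with h | h
    · rw [min_eq_left h, max_eq_right h]
    · rw [min_eq_right h, max_eq_left h]; exact Multiset.cons_swap _ _ _
  rwa [e1, e2] at key

variable {Agent Res : Type*} [Fintype Agent] [Fintype Res] [DecidableEq Agent]

noncomputable def LorenzDom (u : Agent → Finset Res → ℝ) (A A' : Res → Agent) : Prop :=
  (∀ k, ((vec u A).take k).sum ≤ ((vec u A').take k).sum) ∧
  ∃ k, ((vec u A).take k).sum < ((vec u A').take k).sum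

/-- Every Pigou-Dalton transfer yields a Lorenz improvement. -/
theorem stmt15 (u : Agent → Finset Res → ℝ) (A A' : Res → Agent) (i j : Agent)
    (hij : i ≠ j)
    (hoth : ∀ k, k ≠ i → k ≠ j → u k (bundle A k) = u k (bundle A' k))
    (hmean : u i (bundle A i) + u j (bundle A j) = u i (bundle A' i) + u j (bundle A' j))
    (hineq : |u i (bundle A' i) - u j (bundle A' j)| < |u i (bundle A i) - u j (bundle A j)|) :
    LorenzDom u A A' := by
  classical
  have hnd : (Finset.univ.val : Multiset Agent).Nodup := Finset.univ.nodup
  have hi : i ∈ (Finset.univ.val : Multiset Agent) := Finset.mem_univ i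
  have hj' : j ∈ (Finset.univ.val : Multiset Agent).erase i :=
    (Multiset.mem_erase_of_ne hij.symm).2 (Finset.mem_univ j)
  have huniv : (Finset.univ.val : Multiset Agent)
      = i ::ₘ j ::ₘ (Finset.univ.val.erase i).erase j := by
    rw [Multiset.cons_erase hj', Multiset.cons_erase hi]
  have hRs : ((Finset.univ.val.erase i).erase j).map (fun k => u k (bundle A k))
      = ((Finset.univ.val.erase i).erase j).map (fun k => u k (bundle A' k)) := by
    apply Multiset.map_congr rfl
    intro x hx
    exact hoth x ((hnd.mem_erase_iff.1 (Multiset.mem_of_mem_erase hx)).1)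
      (((hnd.erase i).mem_erase_iff.1 hx).1)
  have key := key_strict'
    (((Finset.univ.val.erase i).erase j).map (fun k => u k (bundle A k))) hmean hineq
  have hMA : Finset.univ.val.map (fun k => u k (bundle A k))
      = u i (bundle A i) ::ₘ u j (bundle A j) ::ₘ
        ((Finset.univ.val.erase i).erase j).map (fun k => u k (bundle A k)) := by
    have h := congrArg (Multiset.map (fun k => u k (bundle A k))) huniv
    simpa using h
  have hMA' : Finset.univ.val.map (fun k => u k (bundle A' k))
      = u i (bundle A' i) ::ₘ u j (bundle A' j) ::ₘ
        ((Finset.univ.val.erase i).erase j).map (fun k => u k (bundle A k)) := by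
    have h := congrArg (Multiset.map (fun k => u k (bundle A' k))) huniv
    rw [Multiset.map_cons, Multiset.map_cons, ← hRs] at h
    exact h
  obtain ⟨hle, k, hlt⟩ := key
  unfold LorenzDom vec
  constructor
  · intro m
    have h := hle m
    unfold psumAux at h
    rw [← hMA, ← hMA'] at h
    exact h
  · refine ⟨k, ?_⟩
    unfold psumAux at hlt
    rw [← hMA, ← hMA'] at hlt
    exact hlt
end
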